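/- arXiv:1006.1880 — 14 statements merged into one kernel-verified Lean document; each statement's English description precedes it below -/
import Mathlib

section
/- Let n, m, k, ℓ be positive integers with n = m = k + ℓ, and let c = 2. Then positive integers x, y satisfy x^n + y^m = 2·x^k·y^ℓ if and only if x = y. -/
theorem case1_c2 (n m k ℓ : ℕ) (hn : 0 < n) (hm : 0 < m) (hk : 0 < k)
    (hℓ : 0 < ℓ) (h1 : n = m) (h2 : n = k + ℓ) (x y : ℕ) (hx : 0 < x)
    (hy : 0 < y) : x ^ n + y ^ m = 2 * x ^ k * y ^ ℓ ↔ x = y := by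
  subst h1
  constructor
  · intro heq
    by_contra hne
    -- find a prime with different valuations
    obtain ⟨p, hp, hab⟩ : ∃ p, p.Prime ∧ x.factorization p ≠ y.factorization p := by
      by_contra hall
      push_neg at hall
      apply hne
      apply Nat.factorization_inj (by simpa using hx.ne') (by simpa using hy.ne')
      ext p
      by_cases hp : p.Prime
      · exact hall p hp
      · simp [Nat.factorization_eq_zero_of_not_prime _ hp]
    set a := x.factorization p with ha
    set b := y.factorization p with hb
    have hdx : p ^ a ∣ x := Nat.ordProj_dvd x p
    have hdy : p ^ b ∣ y := Nat.ordProj_dvd y p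
    have hdxn : p ^ (n * a) ∣ x ^ n := by
      calc p ^ (n * a) = (p ^ a) ^ n := by rw [← pow_mul, Nat.mul_comm]
      _ ∣ x ^ n := pow_dvd_pow_of_dvd hdx n
    have hdyn : p ^ (n * b) ∣ y ^ n := by
      calc p ^ (n * b) = (p ^ b) ^ n := by rw [← pow_mul, Nat.mul_comm]
      _ ∣ y ^ n := pow_dvd_pow_of_dvd hdy n
    have hrhs : p ^ (k * a + ℓ * b) ∣ 2 * x ^ k * y ^ ℓ := by
      have h1 : p ^ (k * a) ∣ x ^ k := by
        calc p ^ (k * a) = (p ^ a) ^ k := by rw [← pow_mul, Nat.mul_comm]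
        _ ∣ x ^ k := pow_dvd_pow_of_dvd hdx k
      have h2 : p ^ (ℓ * b) ∣ y ^ ℓ := by
        calc p ^ (ℓ * b) = (p ^ b) ^ ℓ := by rw [← pow_mul, Nat.mul_comm]
        _ ∣ y ^ ℓ := pow_dvd_pow_of_dvd hdy ℓ
      calc p ^ (k * a + ℓ * b) = p ^ (k * a) * p ^ (ℓ * b) := by rw [pow_add]
      _ ∣ (x ^ k) * (y ^ ℓ) := mul_dvd_mul h1 h2
      _ ∣ 2 * x ^ k * y ^ ℓ := by rw [mul_assoc]; exact Dvd.dvd.mul_left dvd_rfl 2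
    rcases Nat.lt_or_ge a b with hlt | hge
    · -- a < b : contradiction with v_p(x^n) = n*a
      have hy1 : p ^ (n * a + 1) ∣ y ^ n := by
        refine dvd_trans (pow_dvd_pow p ?_) hdyn
        nlinarith
      have hr1 : p ^ (n * a + 1) ∣ 2 * x ^ k * y ^ ℓ := by
        refine dvd_trans (pow_dvd_pow p ?_) hrhs
        nlinarith
      rw [← heq] at hr1
      have hx1 : p ^ (n * a + 1) ∣ x ^ n := (Nat.dvd_add_left hy1).mp hr1
      rw [Nat.Prime.pow_dvd_iff_le_factorization hp (pow_ne_zero n hx.ne'),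
        Nat.factorization_pow, Finsupp.smul_apply, smul_eq_mul, ← ha] at hx1
      omega
    · have hgt : b < a := lt_of_le_of_ne hge (fun h => hab h.symm)
      have hx1 : p ^ (n * b + 1) ∣ x ^ n := by
        refine dvd_trans (pow_dvd_pow p ?_) hdxn
        nlinarith
      have hr1 : p ^ (n * b + 1) ∣ 2 * x ^ k * y ^ ℓ := by
        refine dvd_trans (pow_dvd_pow p ?_) hrhs
        nlinarith
      rw [← heq] at hr1
      have hy1 : p ^ (n * b + 1) ∣ y ^ n := (Nat.dvd_add_right hx1).mp hr1
      rw [Nat.Prime.pow_dvd_iff_le_factorization hp (pow_ne_zero n hy.ne'),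
        Nat.factorization_pow, Finsupp.smul_apply, smul_eq_mul, ← hb] at hy1
      omega
  · rintro rfl
    subst h2
    ring
end

section
/- Let n, m, k, ℓ, c be positive integers with n = m = k + ℓ and c ≠ 2. Then the equation x^n + y^m = c·x^k·y^ℓ has no solution in positive integers x, y. -/
/-!
The equation is homogeneous of degree `k + ℓ`, so dividing `x` and `y` by their gcd gives a
coprime solution `(a, b)`. Then `a` divides `b ^ (k + ℓ)` and `b` divides `a ^ (k + ℓ)`, forcing
`a = b = 1`, and the equation collapses to `2 = c`.
-/

theorem Nat.Coprime.eq_one_of_dvd_pow_add_pow {a b n : ℕ} (hab : a.Coprime b) (hn : n ≠ 0)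
    (h : a ∣ a ^ n + b ^ n) : a = 1 :=
  (hab.pow_right n).eq_one_of_dvd ((Nat.dvd_add_right (dvd_pow_self a hn)).mp h)

theorem pow_add_pow_eq_mul_pow_mul_pow_of_mul_right {a b g c k ℓ : ℕ} (hg : 0 < g)
    (h : (a * g) ^ (k + ℓ) + (b * g) ^ (k + ℓ) = c * (a * g) ^ k * (b * g) ^ ℓ) :
    a ^ (k + ℓ) + b ^ (k + ℓ) = c * a ^ k * b ^ ℓ := by
  refine Nat.eq_of_mul_eq_mul_left (pow_pos hg (k + ℓ)) ?_
  calc g ^ (k + ℓ) * (a ^ (k + ℓ) + b ^ (k + ℓ))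
      = (a * g) ^ (k + ℓ) + (b * g) ^ (k + ℓ) := by ring
    _ = c * (a * g) ^ k * (b * g) ^ ℓ := h
    _ = g ^ (k + ℓ) * (c * a ^ k * b ^ ℓ) := by ring

theorem eq_two_of_coprime_of_pow_add_pow_eq {a b c k ℓ : ℕ} (hk : k ≠ 0) (hℓ : ℓ ≠ 0)
    (hab : a.Coprime b) (h : a ^ (k + ℓ) + b ^ (k + ℓ) = c * a ^ k * b ^ ℓ) : c = 2 := by
  have hkℓ : k + ℓ ≠ 0 := by omega
  have ha : a = 1 := hab.eq_one_of_dvd_pow_add_pow hkℓ <| by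
    rw [h]; exact ((dvd_pow_self a hk).mul_left c).mul_right _
  have hb : b = 1 := hab.symm.eq_one_of_dvd_pow_add_pow hkℓ <| by
    rw [add_comm, h]; exact (dvd_pow_self b hℓ).mul_left _
  subst ha hb
  simpa using h.symm

theorem case1_cne2_general (n m k ℓ c : ℕ) (hk : 0 < k)
    (hℓ : 0 < ℓ) (h1 : n = m) (h2 : n = k + ℓ) (hc2 : c ≠ 2) :
    ¬ ∃ x y : ℕ, 0 < x ∧ 0 < y ∧ x ^ n + y ^ m = c * x ^ k * y ^ ℓ := by
  rintro ⟨x, y, hx, -, heq⟩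
  subst h1 h2
  obtain ⟨g, a, b, hg, hab, rfl, rfl⟩ := Nat.exists_coprime' (Nat.gcd_pos_of_pos_left y hx)
  exact hc2 <| eq_two_of_coprime_of_pow_add_pow_eq hk.ne' hℓ.ne' hab
    (pow_add_pow_eq_mul_pow_mul_pow_of_mul_right hg heq)

theorem case1_cne2 (n m k ℓ c : ℕ) (hn : 0 < n) (hm : 0 < m) (hk : 0 < k)
    (hℓ : 0 < ℓ) (hc : 0 < c) (h1 : n = m) (h2 : n = k + ℓ) (hc2 : c ≠ 2) :
    ¬ ∃ x y : ℕ, 0 < x ∧ 0 < y ∧ x ^ n + y ^ m = c * x ^ k * y ^ ℓ :=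
  case1_cne2_general n m k ℓ c hk hℓ h1 h2 hc2
end

section
/- Let n, m, k, ℓ, c be positive integers satisfying n ≤ k and n < m < k + ℓ. If c ≠ 2 then x^n + y^m = c·x^k·y^ℓ has no positive integer solutions; if c = 2, the unique positive integer solution is (x,y) = (1,1). -/
theorem case2 (n m k ℓ c : ℕ) (hn : 0 < n) (hm : 0 < m) (hk : 0 < k)
    (hℓ : 0 < ℓ) (hc : 0 < c) (hnk : n ≤ k) (hnm : n < m) (hmkl : m < k + ℓ)
    (x y : ℕ) (hx : 0 < x) (hy : 0 < y) :
    x ^ n + y ^ m = c * x ^ k * y ^ ℓ ↔ c = 2 ∧ x = 1 ∧ y = 1 := by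
  constructor
  · intro h
    -- Step 1: x^n ∣ y^m
    have hdvd : x ^ n ∣ y ^ m := by
      have h1 : x ^ n ∣ c * x ^ k * y ^ ℓ :=
        Dvd.dvd.mul_right (Dvd.dvd.mul_left (pow_dvd_pow x hnk) c) _
      have h2 : x ^ n ∣ x ^ n + y ^ m := h ▸ h1
      exact (Nat.dvd_add_right dvd_rfl).mp h2
    obtain ⟨u, hu⟩ := hdvd
    have hxpos : 0 < x ^ n := pow_pos hx n
    -- Step 2: 1 + u = c * x^(k-n) * y^ℓ
    have key : 1 + u = c * x ^ (k - n) * y ^ ℓ := by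
      apply Nat.eq_of_mul_eq_mul_left hxpos
      have hxk : x ^ n * x ^ (k - n) = x ^ k := by
        rw [← pow_add]; congr 1; omega
      calc x ^ n * (1 + u) = x ^ n + x ^ n * u := by ring
        _ = x ^ n + y ^ m := by rw [hu]
        _ = c * x ^ k * y ^ ℓ := h
        _ = x ^ n * (c * x ^ (k - n) * y ^ ℓ) := by rw [← hxk]; ring
    -- Step 3: y ∣ 1 + u, hence u coprime to y, and u ∣ y^m, so u = 1
    have hy1u : y ∣ 1 + u := by
      rw [key]
      exact Dvd.dvd.mul_left (dvd_pow_self y hℓ.ne') _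
    have hcop : Nat.Coprime u y := by
      have h1 : Nat.Coprime u (1 + u) := by
        simpa [Nat.add_comm] using (Nat.coprime_succ_self u)
      exact Nat.Coprime.coprime_dvd_right hy1u h1
    have hum : u ∣ y ^ m := Dvd.intro_left _ hu.symm
    have hu1 : u = 1 := Nat.Coprime.eq_one_of_dvd (hcop.pow_right m) hum
    -- So x^n = y^m
    have hxy : y ^ m = x ^ n := by rw [hu, hu1, mul_one]
    have h2 : 2 * x ^ n = c * x ^ k * y ^ ℓ := by rw [← h, hxy]; ring
    -- Case on x
    rcases Nat.lt_or_ge x 2 with hx1 | hx2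
    · -- x = 1
      have hx1 : x = 1 := by omega
      subst hx1
      have hym : y ^ m = 1 := by simpa using hxy
      have hy1 : y = 1 := by
        have := Nat.le_self_pow hm.ne' y
        omega
      subst hy1
      refine ⟨?_, rfl, rfl⟩
      simpa using h2.symm
    · -- x ≥ 2: derive contradiction
      exfalso
      have hy2 : 2 ≤ y := by
        rcases Nat.lt_or_ge y 2 with h' | h'
        · have hy1 : y = 1 := by omega
          subst hy1
          have hxn1 : x ^ n = 1 := by simpa using hxy.symm
          have := Nat.le_self_pow hn.ne' x
          omega
        · exact h'
      have hxk : x ^ n ≤ x ^ k := Nat.pow_le_pow_right (by omega) hnk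
      have hykl : x ^ n * y ^ ℓ ≤ c * x ^ k * y ^ ℓ := by
        have : x ^ n ≤ c * x ^ k := le_trans hxk (Nat.le_mul_of_pos_left _ hc)
        exact Nat.mul_le_mul_right _ this
      have hyl2 : y ^ ℓ ≤ 2 := by
        have := hykl.trans_eq h2.symm
        exact Nat.le_of_mul_le_mul_left (by linarith [this]) hxpos
      have hyly : y ≤ y ^ ℓ := by
        calc y = y ^ 1 := (pow_one y).symm
          _ ≤ y ^ ℓ := Nat.pow_le_pow_right (by omega) hℓ
      have hyl : y ^ ℓ = 2 := by omega
      have hyval : y = 2 := by omega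
      have hl1 : ℓ = 1 := by
        subst hyval
        by_contra hne
        have h2l : 2 ≤ ℓ := by omega
        have : 2 ^ 2 ≤ 2 ^ ℓ := Nat.pow_le_pow_right (by norm_num) h2l
        omega
      -- now 2 * x^n = 2 * (c * x^k), so x^n = c * x^k ≥ x^k
      have h3 : x ^ n = c * x ^ k := by
        have : 2 * x ^ n = c * x ^ k * 2 := by rw [h2, hyl]
        omega
      have hkx : x ^ k ≤ x ^ n := by
        rw [h3]; exact Nat.le_mul_of_pos_left _ hc
      have hkn : k ≤ n := (Nat.pow_le_pow_iff_right (by omega : 1 < x)).mp hkx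
      omega
  · rintro ⟨rfl, rfl, rfl⟩
    simp
end

section
/- Let n, m, k, ℓ be positive integers with k + ℓ < n < m, and c ∈ {1, 3, 4, 5}. Then the equation x^n + y^m = c·x^k·y^ℓ has no positive integer solutions. -/
lemma aux_odd_le {A C u v : ℕ} (hAC : A ≤ C) (hu : ¬ 2 ∣ u)
    (h : 2^A * u = 2^C * v) : A = C := by
  by_contra hne
  have h2 : u = 2^(C-A) * v := by
    apply Nat.eq_of_mul_eq_mul_left (pow_pos (by norm_num : (0:ℕ) < 2) A)
    rw [← mul_assoc, ← pow_add, show A + (C-A) = C from by omega]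
    exact h
  apply hu
  rw [h2]
  exact dvd_mul_of_dvd_left (dvd_pow_self 2 (by omega)) v

lemma odd_factor_eq {A C u v : ℕ} (hu : ¬ 2 ∣ u) (hv : ¬ 2 ∣ v)
    (h : 2^A * u = 2^C * v) : A = C ∧ u = v := by
  have hAC : A = C := by
    rcases le_total A C with h' | h'
    · exact aux_odd_le h' hu h
    · exact (aux_odd_le h' hv h.symm).symm
  subst hAC
  exact ⟨rfl, Nat.eq_of_mul_eq_mul_left (pow_pos (by norm_num : (0:ℕ) < 2) A) h⟩

lemma two_pow_le {A B C c : ℕ} (hAB : A ≤ B) (hc : c = 1 ∨ c = 3 ∨ c = 4 ∨ c = 5)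
    (h : 2^A + 2^B = c * 2^C) :
    (A = B ∧ ((c = 1 ∧ C = A + 1) ∨ (c = 4 ∧ A = C + 1))) ∨
    (B = A + 1 ∧ c = 3 ∧ C = A) ∨ (B = A + 2 ∧ c = 5 ∧ C = A) := by
  have hfac : 2^A * (1 + 2^(B-A)) = 2^C * c := by
    rw [mul_add, mul_one, ← pow_add, show A + (B-A) = B from by omega, h, mul_comm]
  rcases Nat.eq_or_lt_of_le hAB with heqAB | hlt
  · -- A = B
    have h2 : (2:ℕ)^(A+1) = 2^C * c := by
      rw [pow_succ]
      calc (2:ℕ)^A * 2 = 2^A * (1 + 2^(B-A)) := by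
            rw [show B - A = 0 from by omega]; norm_num
        _ = 2^C * c := hfac
    rcases hc with rfl | rfl | rfl | rfl
    · have h2' : (2:ℕ)^(A+1) * 1 = 2^C * 1 := by simpa using h2
      obtain ⟨h3, -⟩ := odd_factor_eq (by norm_num) (by norm_num) h2'
      exact Or.inl ⟨heqAB, Or.inl ⟨rfl, h3.symm⟩⟩
    · have h2' : (2:ℕ)^(A+1) * 1 = 2^C * 3 := by simpa using h2
      obtain ⟨-, h4⟩ := odd_factor_eq (by norm_num) (by norm_num) h2'
      norm_num at h4
    · have h2' : (2:ℕ)^(A+1) * 1 = 2^(C+2) * 1 := by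
        rw [mul_one, mul_one, h2, pow_add]; norm_num
      obtain ⟨h3, -⟩ := odd_factor_eq (by norm_num) (by norm_num) h2'
      exact Or.inl ⟨heqAB, Or.inr ⟨rfl, by omega⟩⟩
    · have h2' : (2:ℕ)^(A+1) * 1 = 2^C * 5 := by simpa using h2
      obtain ⟨-, h4⟩ := odd_factor_eq (by norm_num) (by norm_num) h2'
      norm_num at h4
  · -- A < B
    have hu : ¬ 2 ∣ (1 + 2^(B-A)) := by
      have h5 : 2 ∣ 2^(B-A) := dvd_pow_self 2 (by omega)
      omega
    have hpos : 0 < 2^(B-A) := pow_pos (by norm_num) _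
    rcases hc with rfl | rfl | rfl | rfl
    · have h2' : 2^A * (1 + 2^(B-A)) = 2^C * 1 := by simpa using hfac
      obtain ⟨-, h4⟩ := odd_factor_eq hu (by norm_num) h2'
      omega
    · obtain ⟨h3, h4⟩ := odd_factor_eq hu (by norm_num) hfac
      have h5 : (2:ℕ)^(B-A) = 2^1 := by omega
      have h6 : B - A = 1 := Nat.pow_right_injective (le_refl 2) h5
      exact Or.inr (Or.inl ⟨by omega, rfl, h3.symm⟩)
    · have h2' : 2^A * (1 + 2^(B-A)) = 2^(C+2) * 1 := by
        rw [mul_one, hfac, pow_add]; norm_num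
      obtain ⟨-, h4⟩ := odd_factor_eq hu (by norm_num) h2'
      omega
    · obtain ⟨h3, h4⟩ := odd_factor_eq hu (by norm_num) hfac
      have h5 : (2:ℕ)^(B-A) = 2^2 := by omega
      have h6 : B - A = 2 := Nat.pow_right_injective (le_refl 2) h5
      exact Or.inr (Or.inr ⟨by omega, rfl, h3.symm⟩)

set_option maxHeartbeats 1000000 in
lemma two_pow_cases {A B C c : ℕ} (hc : c = 1 ∨ c = 3 ∨ c = 4 ∨ c = 5)
    (h : 2^A + 2^B = c * 2^C) :
    (A = B ∧ ((c = 1 ∧ C = A + 1) ∨ (c = 4 ∧ A = C + 1))) ∨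
    (B = A + 1 ∧ c = 3 ∧ C = A) ∨ (B = A + 2 ∧ c = 5 ∧ C = A) ∨
    (A = B + 1 ∧ c = 3 ∧ C = B) ∨ (A = B + 2 ∧ c = 5 ∧ C = B) := by
  rcases le_total A B with h' | h'
  · have H := two_pow_le h' hc h
    clear h hc
    omega
  · have h2 : 2^B + 2^A = c * 2^C := by rw [add_comm]; exact h
    have H := two_pow_le h' hc h2
    clear h h2 hc
    omega

theorem case3_small_c (n m k ℓ c : ℕ) (hn : 0 < n) (hm : 0 < m) (hk : 0 < k)
    (hℓ : 0 < ℓ) (hkln : k + ℓ < n) (hnm : n < m)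
    (hc : c ∈ ({1, 3, 4, 5} : Set ℕ)) :
    ¬ ∃ x y : ℕ, 0 < x ∧ 0 < y ∧ x ^ n + y ^ m = c * x ^ k * y ^ ℓ := by
  have hc' : c = 1 ∨ c = 3 ∨ c = 4 ∨ c = 5 := by simpa using hc
  rintro ⟨x, y, hx, hy, heq⟩
  -- Inequality 1: x^(k+1) * y^ℓ < x^n + y^m
  have hL1 : x^(k+1) * y^ℓ < x^n + y^m := by
    by_cases hcase : y^ℓ ≤ x^(n-(k+1))
    · have h1 : x^(k+1) * y^ℓ ≤ x^n := by
        calc x^(k+1) * y^ℓ ≤ x^(k+1) * x^(n-(k+1)) := mul_le_mul_right hcase _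
          _ = x^n := by rw [← pow_add]; congr 1; omega
      have h2 : 0 < y^m := pow_pos hy m
      omega
    · push_neg at hcase
      have hxy : x < y := by
        have h1 : x^ℓ ≤ x^(n-(k+1)) := Nat.pow_le_pow_right hx (by omega)
        have h2 : x^ℓ < y^ℓ := lt_of_le_of_lt h1 hcase
        exact lt_of_pow_lt_pow_left₀ ℓ (Nat.zero_le y) h2
      have h3 : x^(k+1) < y^(m-ℓ) := by
        calc x^(k+1) < y^(k+1) := Nat.pow_lt_pow_left hxy (by omega)
          _ ≤ y^(m-ℓ) := Nat.pow_le_pow_right hy (by omega)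
      have h4 : x^(k+1) * y^ℓ < y^(m-ℓ) * y^ℓ :=
        mul_lt_mul_of_pos_right h3 (pow_pos hy ℓ)
      have h5 : y^(m-ℓ) * y^ℓ = y^m := by rw [← pow_add]; congr 1; omega
      have h6 : 0 < x^n := pow_pos hx n
      omega
  -- Inequality 2: x^k * y^(ℓ+1) < x^n + y^m
  have hL2 : x^k * y^(ℓ+1) < x^n + y^m := by
    by_cases hcase : y^(ℓ+1) ≤ x^(n-k)
    · have h1 : x^k * y^(ℓ+1) ≤ x^n := by
        calc x^k * y^(ℓ+1) ≤ x^k * x^(n-k) := mul_le_mul_right hcase _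
          _ = x^n := by rw [← pow_add]; congr 1; omega
      have h2 : 0 < y^m := pow_pos hy m
      omega
    · push_neg at hcase
      have hxy : x ≤ y := by
        by_contra hyx
        push_neg at hyx
        have h1 : y^(ℓ+1) < x^(ℓ+1) := Nat.pow_lt_pow_left hyx (by omega)
        have h2 : x^(ℓ+1) ≤ x^(n-k) := Nat.pow_le_pow_right hx (by omega)
        omega
      have h3 : x^k ≤ y^(m-(ℓ+1)) := by
        calc x^k ≤ y^k := Nat.pow_le_pow_left hxy k
          _ ≤ y^(m-(ℓ+1)) := Nat.pow_le_pow_right hy (by omega)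
      have h4 : x^k * y^(ℓ+1) ≤ y^(m-(ℓ+1)) * y^(ℓ+1) := mul_le_mul_left h3 _
      have h5 : y^(m-(ℓ+1)) * y^(ℓ+1) = y^m := by rw [← pow_add]; congr 1; omega
      have h6 : 0 < x^n := pow_pos hx n
      omega
  -- Bounds x < c and y < c
  have hxc : x < c := by
    have h1 : x * (x^k * y^ℓ) < c * (x^k * y^ℓ) := by
      have e1 : x * (x^k * y^ℓ) = x^(k+1) * y^ℓ := by ring
      have e2 : c * (x^k * y^ℓ) = c * x^k * y^ℓ := by ring
      rw [e1, e2, heq.symm] at *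
      omega
    exact lt_of_mul_lt_mul_right h1 (Nat.zero_le _)
  have hyc : y < c := by
    have h1 : y * (x^k * y^ℓ) < c * (x^k * y^ℓ) := by
      have e1 : y * (x^k * y^ℓ) = x^k * y^(ℓ+1) := by ring
      have e2 : c * (x^k * y^ℓ) = c * x^k * y^ℓ := by ring
      rw [e1, e2, heq.symm] at *
      omega
    exact lt_of_mul_lt_mul_right h1 (Nat.zero_le _)
  have hx4 : x ≤ 4 := by omega
  have hy4 : y ≤ 4 := by omega
  -- divisibility link
  have hdvd : ∀ p : ℕ, p.Prime → (p ∣ x ↔ p ∣ y) := by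
    intro p hp
    constructor
    · intro hpx
      have h1 : p ∣ c * x^k * y^ℓ := ((dvd_pow hpx hk.ne').mul_left c).mul_right (y^ℓ)
      have h4 : p ∣ x^n + y^m := by rw [heq]; exact h1
      have h3 : p ∣ y^m := by
        have h5 := Nat.dvd_sub h4 (dvd_pow hpx hn.ne')
        simpa using h5
      exact hp.dvd_of_dvd_pow h3
    · intro hpy
      have h1 : p ∣ c * x^k * y^ℓ := Dvd.dvd.mul_left (dvd_pow hpy hℓ.ne') (c * x^k)
      have h4 : p ∣ x^n + y^m := by rw [heq]; exact h1
      have h3 : p ∣ x^n := by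
        have h5 := Nat.dvd_sub h4 (dvd_pow hpy hm.ne')
        simpa using h5
      exact hp.dvd_of_dvd_pow h3
  have h2link := hdvd 2 Nat.prime_two
  have h3link := hdvd 3 Nat.prime_three
  clear hdvd hL1 hL2 hc hxc hyc
  interval_cases x <;> interval_cases y
  · -- (1,1)
    simp only [one_pow, mul_one] at heq
    omega
  · exact absurd h2link (by norm_num)
  · exact absurd h3link (by norm_num)
  · exact absurd h2link (by norm_num)
  · exact absurd h2link (by norm_num)
  · -- (2,2)
    have heq' : 2^n + 2^m = c * 2^(k+ℓ) := by rw [heq, pow_add, mul_assoc]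
    have H := two_pow_cases hc' heq'
    clear heq heq' h2link h3link
    omega
  · exact absurd h2link (by norm_num)
  · -- (2,4)
    have e1 : (4:ℕ)^m = 2^(2*m) := by rw [pow_mul]; norm_num
    have e2 : (4:ℕ)^ℓ = 2^(2*ℓ) := by rw [pow_mul]; norm_num
    rw [e1, e2] at heq
    have heq' : 2^n + 2^(2*m) = c * 2^(k+2*ℓ) := by rw [heq, pow_add, mul_assoc]
    have H := two_pow_cases hc' heq'
    clear heq heq' h2link h3link
    omega
  · exact absurd h3link (by norm_num)
  · exact absurd h2link (by norm_num)
  · -- (3,3)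
    have hK : (3:ℕ)^(k+ℓ+1) ∣ 3^n + 3^m :=
      dvd_add (pow_dvd_pow 3 (by omega)) (pow_dvd_pow 3 (by omega))
    rw [heq] at hK
    have e1 : c * 3^k * 3^ℓ = 3^(k+ℓ) * c := by rw [pow_add]; ring
    have e2 : (3:ℕ)^(k+ℓ+1) = 3^(k+ℓ) * 3 := pow_succ 3 (k+ℓ)
    rw [e1, e2] at hK
    have h3c : 3 ∣ c :=
      (Nat.mul_dvd_mul_iff_left (pow_pos (by norm_num : (0:ℕ) < 3) (k+ℓ))).mp hK
    have hc3 : c = 3 := by omega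
    subst hc3
    have hsz : (3:ℕ)^(k+ℓ+1) ≤ 3^n := Nat.pow_le_pow_right (by norm_num) (by omega)
    have e3 : (3:ℕ) * 3^k * 3^ℓ = 3^(k+ℓ+1) := by rw [pow_succ, pow_add]; ring
    rw [e3] at heq
    have hpos : 0 < (3:ℕ)^m := pow_pos (by norm_num) m
    omega
  · exact absurd h2link (by norm_num)
  · exact absurd h2link (by norm_num)
  · -- (4,2)
    have e1 : (4:ℕ)^n = 2^(2*n) := by rw [pow_mul]; norm_num
    have e2 : (4:ℕ)^k = 2^(2*k) := by rw [pow_mul]; norm_num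
    rw [e1, e2] at heq
    have heq' : 2^(2*n) + 2^m = c * 2^(2*k+ℓ) := by rw [heq, pow_add, mul_assoc]
    have H := two_pow_cases hc' heq'
    clear heq heq' h2link h3link
    omega
  · exact absurd h3link (by norm_num)
  · -- (4,4)
    have e1 : (4:ℕ)^n = 2^(2*n) := by rw [pow_mul]; norm_num
    have e2 : (4:ℕ)^m = 2^(2*m) := by rw [pow_mul]; norm_num
    have e3 : (4:ℕ)^k = 2^(2*k) := by rw [pow_mul]; norm_num
    have e4 : (4:ℕ)^ℓ = 2^(2*ℓ) := by rw [pow_mul]; norm_num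
    rw [e1, e2, e3, e4] at heq
    have heq' : 2^(2*n) + 2^(2*m) = c * 2^(2*k+2*ℓ) := by rw [heq, pow_add, mul_assoc]
    have H := two_pow_cases hc' heq'
    clear heq heq' h2link h3link
    omega
end

section
/- Let n, m, k, ℓ be positive integers with k + ℓ < n < m and c = 2. Then the unique positive integer solution of x^n + y^m = 2·x^k·y^ℓ is (x,y) = (1,1). -/
theorem case3_c2 (n m k ℓ : ℕ) (hn : 0 < n) (hm : 0 < m) (hk : 0 < k)
    (hℓ : 0 < ℓ) (hkln : k + ℓ < n) (hnm : n < m) (x y : ℕ) (hx : 0 < x)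
    (hy : 0 < y) :
    x ^ n + y ^ m = 2 * x ^ k * y ^ ℓ ↔ x = 1 ∧ y = 1 := by
  constructor
  · intro h
    obtain ⟨a, rfl⟩ : ∃ a, n = k + a := ⟨n - k, by omega⟩
    obtain ⟨b, rfl⟩ : ∃ b, m = ℓ + b := ⟨m - ℓ, by omega⟩
    have hℓa : ℓ < a := by omega
    have hb : k + a < ℓ + b := hnm
    have hb1 : 0 < b := by omega
    have hxk : 0 < x ^ k := pow_pos hx k
    have hyl : 0 < y ^ ℓ := pow_pos hy ℓ
    -- x^a < 2 * y^ℓ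
    have hx1 : x ^ a < 2 * y ^ ℓ := by
      have h1 : x ^ k * x ^ a < x ^ k * (2 * y ^ ℓ) := by
        have e1 : x ^ k * x ^ a = x ^ (k + a) := (pow_add x k a).symm
        have e2 : x ^ k * (2 * y ^ ℓ) = 2 * x ^ k * y ^ ℓ := by ring
        rw [e1, e2]
        have := pow_pos hy (ℓ + b)
        omega
      exact Nat.lt_of_mul_lt_mul_left h1
    -- y^b < 2 * x^k
    have hy1 : y ^ b < 2 * x ^ k := by
      have h1 : y ^ ℓ * y ^ b < y ^ ℓ * (2 * x ^ k) := by
        have e1 : y ^ ℓ * y ^ b = y ^ (ℓ + b) := (pow_add y ℓ b).symm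
        have e2 : y ^ ℓ * (2 * x ^ k) = 2 * x ^ k * y ^ ℓ := by ring
        rw [e1, e2]
        have := pow_pos hx (k + a)
        omega
      exact Nat.lt_of_mul_lt_mul_left h1
    -- combine: x^(a*b) < 2^(ℓ+b) * x^(k*ℓ)
    have key : x ^ (a * b) < 2 ^ (ℓ + b) * x ^ (k * ℓ) := by
      have h2 : (x ^ a) ^ b < (2 * y ^ ℓ) ^ b :=
        Nat.pow_lt_pow_left hx1 (by omega)
      have h3 : (y ^ b) ^ ℓ ≤ (2 * x ^ k) ^ ℓ :=
        Nat.pow_le_pow_left (le_of_lt hy1) ℓ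
      have e1 : (2 * y ^ ℓ) ^ b = 2 ^ b * (y ^ b) ^ ℓ := by
        rw [mul_pow, ← pow_mul, ← pow_mul, Nat.mul_comm ℓ b]
      have e2 : (2 * x ^ k) ^ ℓ = 2 ^ ℓ * x ^ (k * ℓ) := by
        rw [mul_pow, ← pow_mul]
      calc x ^ (a * b) = (x ^ a) ^ b := by rw [pow_mul]
        _ < 2 ^ b * (y ^ b) ^ ℓ := by rw [← e1]; exact h2
        _ ≤ 2 ^ b * (2 ^ ℓ * x ^ (k * ℓ)) := by
            exact Nat.mul_le_mul_left _ (e2 ▸ h3)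
        _ = 2 ^ (ℓ + b) * x ^ (k * ℓ) := by rw [pow_add]; ring
    obtain ⟨c, rfl⟩ : ∃ c, a = ℓ + 1 + c := ⟨a - ℓ - 1, by omega⟩
    obtain ⟨e, rfl⟩ : ∃ e, b = k + c + 2 + e := ⟨b - k - c - 2, by omega⟩
    obtain ⟨D, hD⟩ : ∃ D, (ℓ + 1 + c) * (k + c + 2 + e) = k * ℓ + D :=
      ⟨(ℓ + 1 + c) * (k + c + 2 + e) - k * ℓ, by
        have hle : k * ℓ ≤ (ℓ + 1 + c) * (k + c + 2 + e) := by nlinarith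
        omega⟩
    have hD2 : ℓ + (k + c + 2 + e) < D := by nlinarith
    have hxD : x ^ D < 2 ^ (ℓ + (k + c + 2 + e)) := by
      have h4 : x ^ (k * ℓ) * x ^ D < x ^ (k * ℓ) * 2 ^ (ℓ + (k + c + 2 + e)) := by
        rw [← pow_add, ← hD]
        calc x ^ ((ℓ + 1 + c) * (k + c + 2 + e))
            < 2 ^ (ℓ + (k + c + 2 + e)) * x ^ (k * ℓ) := key
          _ = x ^ (k * ℓ) * 2 ^ (ℓ + (k + c + 2 + e)) := by ring
      exact Nat.lt_of_mul_lt_mul_left h4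
    have hx1' : x = 1 := by
      by_contra hne
      have hx2 : 2 ≤ x := by omega
      have : 2 ^ D ≤ x ^ D := Nat.pow_le_pow_left hx2 D
      have hlt : (2:ℕ) ^ D < 2 ^ (ℓ + (k + c + 2 + e)) := lt_of_le_of_lt this hxD
      have := (Nat.pow_lt_pow_iff_right (by norm_num : 1 < 2)).mp hlt
      omega
    subst hx1'
    refine ⟨rfl, ?_⟩
    simp only [one_pow, mul_one] at h
    by_contra hne
    have hy2 : 2 ≤ y := by omega
    have h5 : 2 ≤ y ^ (k + c + 2 + e) := Nat.one_lt_pow (by omega) hy2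
    have : 2 * y ^ ℓ ≤ y ^ (ℓ + (k + c + 2 + e)) := by
      rw [pow_add]
      nlinarith [pow_pos hy ℓ]
    omega
  · rintro ⟨rfl, rfl⟩
    simp
end

section
/- Suppose n = 2, m = 6 and (k, ℓ) = (2, 2) or (3, 1). If c ≠ 2 then x^2 + y^6 = c·x^k·y^ℓ has no positive integer solution; if c = 2 the unique positive integer solution is (x,y) = (1,1). -/
lemma aux_m_eq_one (m y : ℕ) (h1 : m ∣ y ^ 3) (h2 : y ∣ 1 + m ^ 2) : m = 1 := by
  have hg : Nat.Coprime m y := by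
    have g1 : Nat.gcd m y ∣ 1 := by
      have := Nat.dvd_sub ((Nat.gcd_dvd_right m y).trans h2)
        ((Nat.gcd_dvd_left m y).trans (dvd_pow_self m two_ne_zero))
      simpa using this
    exact Nat.eq_one_of_dvd_one g1
  have hcop : Nat.Coprime m (y ^ 3) := hg.pow_right 3
  exact Nat.eq_one_of_dvd_one (hcop ▸ Nat.dvd_gcd dvd_rfl h1)

theorem case4_special (k ℓ c : ℕ) (hc : 0 < c)
    (hkl : (k = 2 ∧ ℓ = 2) ∨ (k = 3 ∧ ℓ = 1)) (x y : ℕ) (hx : 0 < x)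
    (hy : 0 < y) :
    x ^ 2 + y ^ 6 = c * x ^ k * y ^ ℓ ↔ c = 2 ∧ x = 1 ∧ y = 1 := by
  constructor
  · intro h
    have hx2 : 0 < x ^ 2 := pow_pos hx 2
    rcases hkl with ⟨hk, hl⟩ | ⟨hk, hl⟩ <;> subst hk <;> subst hl
    · -- case (k, ℓ) = (2, 2)
      have hdvd : x ^ 2 ∣ y ^ 6 := by
        have h1 : x ^ 2 ∣ c * x ^ 2 * y ^ 2 := ⟨c * y ^ 2, by ring⟩
        exact (Nat.dvd_add_right dvd_rfl).mp (h ▸ h1)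
      have hxy3 : x ∣ y ^ 3 := by
        have h2 : x ^ 2 ∣ (y ^ 3) ^ 2 := by rwa [← pow_mul]
        exact (Nat.pow_dvd_pow_iff two_ne_zero).mp h2
      obtain ⟨m, hm⟩ := hxy3
      have h6 : y ^ 6 = x ^ 2 * m ^ 2 := by
        rw [show (6 : ℕ) = 3 * 2 from rfl, pow_mul, hm, mul_pow]
      have key : 1 + m ^ 2 = c * y ^ 2 :=
        Nat.eq_of_mul_eq_mul_left hx2 (by rw [mul_add, mul_one, ← h6, h]; ring)
      have hm1 : m = 1 :=
        aux_m_eq_one m y ⟨x, by rw [hm]; ring⟩ ⟨c * y, by rw [key]; ring⟩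
      subst hm1
      have key2 : c * y ^ 2 = 2 := by omega
      have hy1 : y = 1 := by
        by_contra h'
        have h2y : 2 ≤ y := by omega
        nlinarith
      subst hy1
      refine ⟨by omega, by simpa using hm.symm, rfl⟩
    · -- case (k, ℓ) = (3, 1)
      have hdvd : x ^ 2 ∣ y ^ 6 := by
        have h1 : x ^ 2 ∣ c * x ^ 3 * y ^ 1 := ⟨c * x * y, by ring⟩
        exact (Nat.dvd_add_right dvd_rfl).mp (h ▸ h1)
      have hxy3 : x ∣ y ^ 3 := by
        have h2 : x ^ 2 ∣ (y ^ 3) ^ 2 := by rwa [← pow_mul]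
        exact (Nat.pow_dvd_pow_iff two_ne_zero).mp h2
      obtain ⟨m, hm⟩ := hxy3
      have h6 : y ^ 6 = x ^ 2 * m ^ 2 := by
        rw [show (6 : ℕ) = 3 * 2 from rfl, pow_mul, hm, mul_pow]
      have key : 1 + m ^ 2 = c * x * y :=
        Nat.eq_of_mul_eq_mul_left hx2 (by rw [mul_add, mul_one, ← h6, h]; ring)
      have hm1 : m = 1 :=
        aux_m_eq_one m y ⟨x, by rw [hm]; ring⟩ ⟨c * x, by rw [key]; ring⟩
      subst hm1
      have hxy : x = y ^ 3 := by simpa using hm.symm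
      have key2 : c * y ^ 4 = 2 := by
        rw [hxy] at key; nlinarith [key]
      have hy1 : y = 1 := by
        by_contra h'
        have h2y : 2 ≤ y := by omega
        nlinarith [Nat.pow_le_pow_left h2y 4, hc]
      subst hy1
      refine ⟨by omega, by simpa using hxy, rfl⟩
  · rintro ⟨rfl, rfl, rfl⟩
    rcases hkl with ⟨rfl, rfl⟩ | ⟨rfl, rfl⟩ <;> norm_num
end

section
/- Let n, m, k, ℓ be positive integers with n < k + ℓ < m and n ≤ k. If positive integers x, y satisfy x^n + y^m = c·x^k·y^ℓ, then y divides x; more precisely, writing d = gcd(x,y), we have y = d. -/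
theorem case4_y_eq_gcd (n m k ℓ c : ℕ) (hn : 0 < n) (hm : 0 < m) (hk : 0 < k)
    (hℓ : 0 < ℓ) (hc : 0 < c) (hnkl : n < k + ℓ) (hklm : k + ℓ < m)
    (hnk : n ≤ k) (x y : ℕ) (hx : 0 < x) (hy : 0 < y)
    (heq : x ^ n + y ^ m = c * x ^ k * y ^ ℓ) :
    y ∣ x ∧ y = Nat.gcd x y := by
  set d := Nat.gcd x y with hd
  have hd0 : 0 < d := Nat.gcd_pos_of_pos_left y hx
  set x' := x / d with hx'def
  set y' := y / d with hy'def
  have h1 : x = d * x' := (Nat.mul_div_cancel' (Nat.gcd_dvd_left x y)).symm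
  have h2 : y = d * y' := (Nat.mul_div_cancel' (Nat.gcd_dvd_right x y)).symm
  have hcop : Nat.Coprime x' y' := Nat.coprime_div_gcd_div_gcd hd0
  have hnm : n ≤ m := (hnkl.trans hklm).le
  have hnkl' : n ≤ k + ℓ := hnkl.le
  have e1 : d ^ m = d ^ n * d ^ (m - n) := by
    rw [← pow_add, Nat.add_sub_cancel' hnm]
  have e2 : d ^ (k + ℓ) = d ^ n * d ^ (k + ℓ - n) := by
    rw [← pow_add, Nat.add_sub_cancel' hnkl']
  have key : x' ^ n + d ^ (m - n) * y' ^ m = c * d ^ (k + ℓ - n) * x' ^ k * y' ^ ℓ := by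
    apply Nat.eq_of_mul_eq_mul_left (pow_pos hd0 n)
    calc d ^ n * (x' ^ n + d ^ (m - n) * y' ^ m)
        = (d * x') ^ n + (d * y') ^ m := by rw [mul_pow, mul_pow, e1]; ring
      _ = c * (d * x') ^ k * (d * y') ^ ℓ := by rw [← h1, ← h2]; exact heq
      _ = c * d ^ (k + ℓ) * x' ^ k * y' ^ ℓ := by rw [mul_pow, mul_pow, pow_add]; ring
      _ = d ^ n * (c * d ^ (k + ℓ - n) * x' ^ k * y' ^ ℓ) := by rw [e2]; ring
  have hsum : y' ∣ x' ^ n + d ^ (m - n) * y' ^ m := by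
    rw [key]
    exact Dvd.dvd.mul_left (dvd_pow_self y' hℓ.ne') _
  have ht : y' ∣ d ^ (m - n) * y' ^ m :=
    dvd_mul_of_dvd_right (dvd_pow_self y' hm.ne') _
  have hxn : y' ∣ x' ^ n := by
    have := Nat.dvd_sub hsum ht
    simpa using this
  have hy1 : y' = 1 := Nat.Coprime.eq_one_of_dvd (hcop.symm.pow_right n) hxn
  have hyd : y = d := by rw [h2, hy1, mul_one]
  exact ⟨hyd ▸ Nat.gcd_dvd_left x y, hyd⟩
end

section
/- Let m, n, k, ℓ be positive integers with n = k + ℓ < m and c = 1. Then the equation x^n + y^m = x^k·y^ℓ has no positive integer solutions. -/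
theorem case5_c1 (n m k ℓ : ℕ) (hn : 0 < n) (hm : 0 < m) (hk : 0 < k)
    (hℓ : 0 < ℓ) (hn_eq : n = k + ℓ) (hnm : n < m) :
    ¬ ∃ x y : ℕ, 0 < x ∧ 0 < y ∧ x ^ n + y ^ m = x ^ k * y ^ ℓ := by
  rintro ⟨x, y, hx, hy, heq⟩
  have hxk : 0 < x ^ k := pow_pos hx k
  have hyl : 0 < y ^ ℓ := pow_pos hy ℓ
  have h1 : x ^ k * x ^ ℓ < x ^ k * y ^ ℓ := by
    calc x ^ k * x ^ ℓ = x ^ n := by rw [hn_eq, pow_add]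
      _ < x ^ n + y ^ m := by have := pow_pos hy m; omega
      _ = x ^ k * y ^ ℓ := heq
  have hxyℓ : x ^ ℓ < y ^ ℓ := lt_of_mul_lt_mul_left h1 (le_of_lt hxk)
  have hxy : x < y := by
    by_contra h
    exact absurd (Nat.pow_le_pow_left (not_lt.mp h) ℓ) (not_le.mpr hxyℓ)
  have hy2 : 2 ≤ y := by omega
  have hℓm : ℓ < m := by omega
  have h2 : y ^ (m - ℓ) * y ^ ℓ < x ^ k * y ^ ℓ := by
    rw [← pow_add]
    have hml : m - ℓ + ℓ = m := by omega
    rw [hml]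
    calc y ^ m < x ^ n + y ^ m := by have := pow_pos hx n; omega
      _ = x ^ k * y ^ ℓ := heq
  have h3 : y ^ (m - ℓ) < x ^ k := lt_of_mul_lt_mul_right h2 (le_of_lt hyl)
  have h4 : x ^ k < y ^ k := Nat.pow_lt_pow_left hxy (by omega)
  have h5 : y ^ (m - ℓ) < y ^ k := h3.trans h4
  have h6 : m - ℓ < k := (Nat.pow_lt_pow_iff_right hy2).mp h5
  omega
end

section
/- Let m, n, k, ℓ be positive integers with n = k + ℓ < m and c = 2. Then the unique positive integer solution of x^n + y^m = 2·x^k·y^ℓ is (x,y) = (1,1). -/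
theorem case5_c2 (n m k ℓ : ℕ) (hn : 0 < n) (hm : 0 < m) (hk : 0 < k)
    (hℓ : 0 < ℓ) (hn_eq : n = k + ℓ) (hnm : n < m) (x y : ℕ) (hx : 0 < x)
    (hy : 0 < y) :
    x ^ n + y ^ m = 2 * x ^ k * y ^ ℓ ↔ x = 1 ∧ y = 1 := by
  constructor
  · intro h
    have hxn : x ^ n = x ^ k * x ^ ℓ := by rw [hn_eq, pow_add]
    have h2 : x ^ k * (2 * y ^ ℓ) = x ^ n + y ^ m := by rw [h]; ring
    have hxk : 0 < x ^ k := pow_pos hx k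
    have hym : 0 < y ^ m := pow_pos hy m
    have hlt : x ^ ℓ < 2 * y ^ ℓ := by
      have h1 : x ^ k * x ^ ℓ < x ^ k * (2 * y ^ ℓ) := by
        rw [h2, ← hxn]; omega
      exact lt_of_mul_lt_mul_left h1 (Nat.zero_le _)
    have hD : x ^ k * (2 * y ^ ℓ - x ^ ℓ) = y ^ m := by
      rw [Nat.mul_sub, h2, ← hxn]
      omega
    have hDne : 2 * y ^ ℓ - x ^ ℓ ≠ 0 := by omega
    have hyx : y ∣ x := by
      rw [← Nat.factorization_le_iff_dvd hy.ne' hx.ne']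
      rw [Finsupp.le_def]
      intro p
      by_cases hp : p.Prime
      · by_contra hab
        push_neg at hab
        have hfact : (x ^ k * (2 * y ^ ℓ - x ^ ℓ)).factorization p
            = (y ^ m).factorization p := by rw [hD]
        rw [Nat.factorization_mul (pow_ne_zero _ hx.ne') hDne] at hfact
        simp only [Nat.factorization_pow, Finsupp.add_apply, Finsupp.smul_apply,
          smul_eq_mul] at hfact
        -- hfact : k * vx + vD = m * vy  (hopefully)
        have hmb : ℓ * x.factorization p + 1 ≤ (2 * y ^ ℓ - x ^ ℓ).factorization p := by
          have h1 : n * (x.factorization p + 1) ≤ n * y.factorization p :=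
            Nat.mul_le_mul_left _ hab
          have h2 : n * y.factorization p ≤ m * y.factorization p :=
            Nat.mul_le_mul_right _ (le_of_lt hnm)
          have h3 : n * (x.factorization p + 1)
              = k * x.factorization p + ℓ * x.factorization p + k + ℓ := by
            rw [hn_eq]; ring
          omega
        have hd1 : p ^ (ℓ * x.factorization p + 1) ∣ 2 * y ^ ℓ - x ^ ℓ :=
          (Nat.Prime.pow_dvd_iff_le_factorization hp hDne).mpr hmb
        have hd2 : p ^ (ℓ * x.factorization p + 1) ∣ 2 * y ^ ℓ := by
          refine Dvd.dvd.mul_left ?_ 2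
          refine (Nat.Prime.pow_dvd_iff_le_factorization hp (pow_ne_zero _ hy.ne')).mpr ?_
          simp only [Nat.factorization_pow, Finsupp.smul_apply, smul_eq_mul]
          have h4 : ℓ * (x.factorization p + 1) ≤ ℓ * y.factorization p :=
            Nat.mul_le_mul_left _ hab
          have h5 : ℓ * (x.factorization p + 1) = ℓ * x.factorization p + ℓ := by ring
          omega
        have hd3 : p ^ (ℓ * x.factorization p + 1) ∣ x ^ ℓ := by
          have hsub := Nat.dvd_sub hd2 hd1
          have heq : 2 * y ^ ℓ - (2 * y ^ ℓ - x ^ ℓ) = x ^ ℓ := by omega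
          rwa [heq] at hsub
        have hle : ℓ * x.factorization p + 1 ≤ (x ^ ℓ).factorization p :=
          (Nat.Prime.pow_dvd_iff_le_factorization hp (pow_ne_zero _ hx.ne')).mp hd3
        simp only [Nat.factorization_pow, Finsupp.smul_apply, smul_eq_mul] at hle
        omega
      · simp [Nat.factorization_eq_zero_of_not_prime _ hp]
    obtain ⟨z, rfl⟩ := hyx
    have hz : 0 < z := Nat.pos_of_ne_zero (by rintro rfl; simp at hx)
    have hz1 : z = 1 := by
      by_contra hz1
      have hz2 : 2 ≤ z := by omega
      have hbig : 2 * y ^ ℓ ≤ (y * z) ^ ℓ := by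
        calc 2 * y ^ ℓ ≤ 2 ^ ℓ * y ^ ℓ := by
              have : 2 ≤ 2 ^ ℓ := Nat.le_self_pow hℓ.ne' 2
              exact Nat.mul_le_mul_right _ this
          _ ≤ z ^ ℓ * y ^ ℓ := Nat.mul_le_mul_right _ (Nat.pow_le_pow_left hz2 ℓ)
          _ = (y * z) ^ ℓ := by rw [mul_pow]; ring
      omega
    subst hz1
    rw [mul_one] at h ⊢
    have hyy : y ^ n + y ^ m = 2 * y ^ n := by
      rw [h, hn_eq, pow_add]; ring
    have hym_eq : y ^ m = y ^ n := by omega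
    have hy1 : y = 1 := by
      by_contra hy1
      have hy2 : 1 < y := by omega
      have := Nat.pow_lt_pow_right hy2 hnm
      omega
    exact ⟨hy1, hy1⟩
  · rintro ⟨rfl, rfl⟩
    simp
end

section
/- Let m, n, k, ℓ be positive integers with n = k + ℓ < m, c = 3, n − k ≥ 2, and m − n = 1. Then the unique positive integer solution of x^n + y^m = 3·x^k·y^ℓ is (x,y) = (2,2). -/
theorem case5_c3_mn1 (n m k ℓ : ℕ) (hn : 0 < n) (hm : 0 < m) (hk : 0 < k)
    (hℓ : 0 < ℓ) (hn_eq : n = k + ℓ) (hnm : n < m) (hnk : 2 ≤ n - k)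
    (hmn : m - n = 1) (x y : ℕ) (hx : 0 < x) (hy : 0 < y) :
    x ^ n + y ^ m = 3 * x ^ k * y ^ ℓ ↔ x = 2 ∧ y = 2 := by
  have hm1 : m = n + 1 := by omega
  have hℓ2 : 2 ≤ ℓ := by omega
  constructor
  · intro heq
    set d := Nat.gcd x y with hd
    have hd0 : 0 < d := Nat.gcd_pos_of_pos_left y hx
    obtain ⟨u, hu⟩ := Nat.gcd_dvd_left x y
    obtain ⟨v, hv⟩ := Nat.gcd_dvd_right x y
    have hu0 : 0 < u := by
      rcases Nat.eq_zero_or_pos u with h | h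
      · subst h; simp at hu; omega
      · exact h
    have hv0 : 0 < v := by
      rcases Nat.eq_zero_or_pos v with h | h
      · subst h; simp at hv; omega
      · exact h
    have hcop : Nat.Coprime u v := by
      have h := Nat.coprime_div_gcd_div_gcd (m := x) (n := y) hd0
      have h1 : x / d = u := by rw [hu]; exact Nat.mul_div_cancel_left u hd0
      have h2 : y / d = v := by rw [hv]; exact Nat.mul_div_cancel_left v hd0
      rwa [h1, h2] at h
    have hdn : 0 < d ^ n := pow_pos hd0 n
    have key : u ^ n + d * v ^ m = 3 * u ^ k * v ^ ℓ := by
      have h2 : d ^ n * (u ^ n + d * v ^ m) = d ^ n * (3 * u ^ k * v ^ ℓ) := by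
        calc d ^ n * (u ^ n + d * v ^ m) = (d * u) ^ n + (d * v) ^ m := by
              rw [hm1, hn_eq]; ring
          _ = 3 * (d * u) ^ k * (d * v) ^ ℓ := by rw [← hu, ← hv]; exact heq
          _ = d ^ n * (3 * u ^ k * v ^ ℓ) := by rw [hn_eq]; ring
      exact Nat.eq_of_mul_eq_mul_left hdn h2
    have h3 : v ∣ u ^ n + d * v ^ m := by
      rw [key]
      exact Dvd.dvd.mul_left (dvd_pow_self v hℓ.ne') (3 * u ^ k)
    have h4 : v ∣ d * v ^ m := Dvd.dvd.mul_left (dvd_pow_self v (by omega)) d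
    have h5 : v ∣ u ^ n := by
      have := Nat.dvd_sub h3 h4
      simpa using this
    have hv1 : v = 1 := by
      have hcp : Nat.Coprime (u ^ n) v := Nat.Coprime.pow_left n hcop
      have : v ∣ 1 := hcp ▸ Nat.dvd_gcd h5 dvd_rfl
      exact Nat.dvd_one.mp this
    have hyd : y = d := by rw [hv, hv1, mul_one]
    rw [hv1] at key
    simp only [one_pow, mul_one] at key
    -- key : u ^ n + d = 3 * u ^ k
    have hun : u ^ n = u ^ k * u ^ ℓ := by rw [hn_eq, pow_add]
    rcases Nat.lt_or_ge u 2 with h1 | h2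
    · -- u = 1
      have hu1 : u = 1 := by omega
      rw [hu1] at key
      simp at key
      constructor
      · rw [hu, hu1, mul_one]; omega
      · omega
    · exfalso
      have hl4 : 4 ≤ u ^ ℓ := by
        calc (4 : ℕ) = 2 ^ 2 := by norm_num
          _ ≤ u ^ 2 := Nat.pow_le_pow_left h2 2
          _ ≤ u ^ ℓ := Nat.pow_le_pow_right (by omega) hℓ2
      have huk : 0 < u ^ k := pow_pos hu0 k
      have : u ^ k * 4 ≤ u ^ k * u ^ ℓ := Nat.mul_le_mul_left _ hl4
      omega
  · rintro ⟨rfl, rfl⟩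
    rw [hm1, hn_eq, pow_add, pow_succ, pow_add]
    ring
end

section
/- Let m, n, k, ℓ be positive integers with n = k + ℓ < m, c = 3, n − k ≥ 2, and m − n ≥ 2. Then x^n + y^m = 3·x^k·y^ℓ has no positive integer solutions. -/
theorem case5_c3_mn2 (n m k ℓ : ℕ) (hn : 0 < n) (hm : 0 < m) (hk : 0 < k)
    (hℓ : 0 < ℓ) (hn_eq : n = k + ℓ) (hnm : n < m) (hnk : 2 ≤ n - k)
    (hmn : 2 ≤ m - n) :
    ¬ ∃ x y : ℕ, 0 < x ∧ 0 < y ∧ x ^ n + y ^ m = 3 * x ^ k * y ^ ℓ := by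
  rintro ⟨x, y, hx, hy, heq⟩
  have hℓ2 : 2 ≤ ℓ := by omega
  have hmn2 : 2 ≤ m - n := hmn
  -- Step 1: y ∣ x
  have hyx : y ∣ x := by
    rw [← Nat.factorization_le_iff_dvd hy.ne' hx.ne']
    rw [Finsupp.le_def]
    intro p
    by_cases hp : p.Prime
    · by_contra hab
      push_neg at hab
      set a := x.factorization p with ha
      set b := y.factorization p with hb
      -- hab : a < b
      have hpa : p ^ a ∣ x := Nat.ordProj_dvd x p
      have hpb : p ^ b ∣ y := Nat.ordProj_dvd y p
      have hym : p ^ (n * a + 1) ∣ y ^ m := by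
        have h1 : p ^ (m * b) ∣ y ^ m := by
          rw [mul_comm, pow_mul]
          exact pow_dvd_pow_of_dvd hpb m
        exact dvd_trans (pow_dvd_pow p (by nlinarith)) h1
      have hrhs : p ^ (n * a + 1) ∣ 3 * x ^ k * y ^ ℓ := by
        have h1 : p ^ (k * a) ∣ x ^ k := by
          rw [mul_comm, pow_mul]; exact pow_dvd_pow_of_dvd hpa k
        have h2 : p ^ (ℓ * b) ∣ y ^ ℓ := by
          rw [mul_comm, pow_mul]; exact pow_dvd_pow_of_dvd hpb ℓ
        have h3 : p ^ (k * a + ℓ * b) ∣ x ^ k * y ^ ℓ := by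
          rw [pow_add]; exact mul_dvd_mul h1 h2
        have h4 : x ^ k * y ^ ℓ ∣ 3 * x ^ k * y ^ ℓ := by
          exact Dvd.intro_left 3 (by ring)
        refine dvd_trans (pow_dvd_pow p ?_) (h3.trans h4)
        have : ℓ * a + 1 ≤ ℓ * b := by nlinarith
        nlinarith [hn_eq]
      have hsum : p ^ (n * a + 1) ∣ x ^ n + y ^ m := heq ▸ hrhs
      have hxn : p ^ (n * a + 1) ∣ x ^ n := by
        have := Nat.dvd_sub hsum hym
        simpa using this
      have hle : n * a + 1 ≤ (x ^ n).factorization p :=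
        (Nat.Prime.pow_dvd_iff_le_factorization hp (pow_ne_zero n hx.ne')).mp hxn
      rw [Nat.factorization_pow] at hle
      simp only [Finsupp.smul_apply, smul_eq_mul] at hle
      rw [← ha] at hle
      omega
    · simp [Nat.factorization_eq_zero_of_not_prime y hp]
  -- Step 2: substitute x = y * q
  obtain ⟨q, hq⟩ := hyx
  have hq0 : 0 < q := by
    rcases Nat.eq_zero_or_pos q with h | h
    · subst h; simp at hq; omega
    · exact h
  have hyn : 0 < y ^ n := pow_pos hy n
  have hkey : q ^ n + y ^ (m - n) = 3 * q ^ k := by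
    have hmsplit : y ^ m = y ^ n * y ^ (m - n) := by
      rw [← pow_add]; congr 1; omega
    have hxn : x ^ n = y ^ n * q ^ n := by rw [hq, mul_pow]
    have hxk : 3 * x ^ k * y ^ ℓ = y ^ n * (3 * q ^ k) := by
      rw [hq, mul_pow, hn_eq, pow_add]; ring
    rw [hxn, hmsplit, hxk] at heq
    have : y ^ n * (q ^ n + y ^ (m - n)) = y ^ n * (3 * q ^ k) := by
      rw [← heq]; ring
    exact Nat.eq_of_mul_eq_mul_left hyn this
  -- Step 3: contradiction
  have hqn : q ^ n = q ^ k * q ^ ℓ := by rw [hn_eq, pow_add]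
  rcases Nat.lt_or_ge q 2 with h | h
  · -- q = 1
    have : q = 1 := by omega
    subst this
    simp at hkey
    -- 1 + y ^ (m - n) = 3, so y ^ (m-n) = 2
    have hy2 : y ^ (m - n) = 2 := by omega
    rcases Nat.lt_or_ge y 2 with hy1 | hy1
    · have : y = 1 := by omega
      subst this; simp at hy2
    · have : 2 ^ 2 ≤ y ^ (m - n) :=
        le_trans (Nat.pow_le_pow_left hy1 2) (Nat.pow_le_pow_right (by omega) hmn2)
      omega
  · -- q ≥ 2
    have h1 : 4 ≤ q ^ ℓ :=
      le_trans (by norm_num : (4:ℕ) ≤ 2 ^ 2) <|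
        le_trans (Nat.pow_le_pow_right (by omega) hℓ2) (Nat.pow_le_pow_left h ℓ)
    have h2 : 0 < q ^ k := pow_pos hq0 k
    have h3 : q ^ k * 4 ≤ q ^ n := by rw [hqn]; exact Nat.mul_le_mul_left _ h1
    have h4 : 0 < y ^ (m - n) := pow_pos hy _
    omega
end

section
/- Let k be a positive integer, n = k + 1, m = n + 1, ℓ = 1, and c = 3. Then the positive integer solutions of x^n + y^m = 3·x^k·y are exactly (x,y) = (2,2) and (x,y) = (2^{k+1}, 2^k). -/
theorem case5_c3_two_solutions (k n m : ℕ) (hk : 0 < k) (hn : n = k + 1)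
    (hm : m = n + 1) (x y : ℕ) (hx : 0 < x) (hy : 0 < y) :
    x ^ n + y ^ m = 3 * x ^ k * y ↔
      (x = 2 ∧ y = 2) ∨ (x = 2 ^ (k + 1) ∧ y = 2 ^ k) := by
  subst hn hm
  constructor
  · intro h
    obtain ⟨a, b, hcop, ha, hb⟩ := Nat.exists_coprime x y
    have hg0 : 0 < Nat.gcd x y := Nat.gcd_pos_of_pos_left _ hx
    generalize hgg : Nat.gcd x y = g at ha hb hg0
    have ha0 : 0 < a := by
      rcases Nat.eq_zero_or_pos a with h0 | h0
      · rw [h0, zero_mul] at ha; omega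
      · exact h0
    rw [ha, hb] at h
    have h2 : g ^ (k + 1) * (a ^ (k + 1) + g * b ^ (k + 2)) =
        g ^ (k + 1) * (3 * a ^ k * b) := by
      rw [mul_pow, mul_pow, mul_pow] at h
      ring_nf at h ⊢
      linarith [h]
    have key : a ^ (k + 1) + g * b ^ (k + 2) = 3 * a ^ k * b :=
      Nat.eq_of_mul_eq_mul_left (pow_pos hg0 _) h2
    have hbdvd : b ∣ a ^ (k + 1) := by
      have h3 : a ^ (k + 1) = 3 * a ^ k * b - g * b ^ (k + 2) := by omega
      rw [h3]
      exact Nat.dvd_sub (dvd_mul_left b (3 * a ^ k))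
        (dvd_mul_of_dvd_right (dvd_pow_self b (by omega)) g)
    have hb1 : b = 1 := by
      have hc : Nat.Coprime b (a ^ (k + 1)) := (hcop.symm).pow_right _
      exact Nat.eq_one_of_dvd_one (hc ▸ Nat.dvd_gcd dvd_rfl hbdvd)
    subst hb1
    rw [one_mul] at hb
    simp only [one_pow, mul_one] at key
    -- key : a ^ (k+1) + g = 3 * a ^ k
    have hpk : 0 < a ^ k := pow_pos ha0 k
    rw [pow_succ] at key
    -- key : a ^ k * a + g = 3 * a ^ k
    have hlt : a < 3 := by
      by_contra hge
      push_neg at hge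
      have h4 : 3 * a ^ k ≤ a ^ k * a := by
        calc 3 * a ^ k = a ^ k * 3 := mul_comm _ _
          _ ≤ a ^ k * a := Nat.mul_le_mul_left _ hge
      linarith
    interval_cases a
    · left
      simp only [one_pow, mul_one, one_mul] at key ha
      constructor <;> omega
    · right
      have hgk : g = 2 ^ k := by omega
      constructor
      · rw [ha, hgk, pow_succ, mul_comm]
      · rw [hb, hgk]
  · rintro (⟨rfl, rfl⟩ | ⟨rfl, rfl⟩)
    · rw [pow_succ, pow_succ, pow_succ]; ring
    · rw [← pow_mul, ← pow_mul, ← pow_mul]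
      have e1 : (k + 1) * (k + 1) = k * (k + 2) + 1 := by ring
      have e3 : (k + 1) * k + k = k * (k + 2) := by ring
      rw [e1, pow_succ]
      calc 2 ^ (k * (k + 2)) * 2 + 2 ^ (k * (k + 2))
          = 3 * 2 ^ (k * (k + 2)) := by ring
        _ = 3 * 2 ^ ((k + 1) * k + k) := by rw [e3]
        _ = 3 * 2 ^ ((k + 1) * k) * 2 ^ k := by rw [pow_add]; ring
end

section
/- Let m, n, k, ℓ be positive integers with m = n < k + ℓ. If c = 2 the unique positive integer solution of x^n + y^m = c·x^k·y^ℓ is (1,1); if c ≥ 3 there are no solutions; if c = 1 and k + ℓ = n + 1 the unique solution is (2,2); if c = 1 and k + ℓ ≥ n + 2 there are no solutions. -/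
lemma case7_key (n k ℓ c x y : ℕ) (hn : 0 < n) (hk : 0 < k) (hℓ : 0 < ℓ)
    (hx : 0 < x) (hy : 0 < y) (hnkl : n < k + ℓ)
    (h : x ^ n + y ^ n = c * x ^ k * y ^ ℓ) :
    x = y ∧ c * x ^ (k + ℓ - n) = 2 := by
  set g := Nat.gcd x y with hg
  have hg0 : 0 < g := Nat.gcd_pos_of_pos_left y hx
  obtain ⟨a, ha⟩ := Nat.gcd_dvd_left x y
  obtain ⟨b, hb⟩ := Nat.gcd_dvd_right x y
  rw [← hg] at ha hb
  have hab : Nat.Coprime a b := by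
    have h1 := Nat.coprime_div_gcd_div_gcd (m := x) (n := y) hg0
    have e1 : x / g = a := by rw [ha, Nat.mul_div_cancel_left _ hg0]
    have e2 : y / g = b := by rw [hb, Nat.mul_div_cancel_left _ hg0]
    rw [← hg, e1, e2] at h1
    exact h1
  set t := k + ℓ - n with ht
  have htkl : k + ℓ = n + t := by omega
  have h2 : a ^ n + b ^ n = c * g ^ t * (a ^ k * b ^ ℓ) := by
    have hgn : 0 < g ^ n := pow_pos hg0 n
    apply Nat.eq_of_mul_eq_mul_left hgn
    have hh := h
    rw [ha, hb] at hh
    calc g ^ n * (a ^ n + b ^ n) = (g * a) ^ n + g ^ n * b ^ n := by ring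
      _ = c * (g * a) ^ k * (g * b) ^ ℓ := by rw [← mul_pow]; exact hh
      _ = g ^ (k + ℓ) * (c * (a ^ k * b ^ ℓ)) := by ring
      _ = g ^ n * (c * g ^ t * (a ^ k * b ^ ℓ)) := by rw [htkl, pow_add]; ring
  have ha1 : a = 1 := by
    have hdvd : a ∣ b ^ n := by
      have hsum : a ∣ a ^ n + b ^ n := by
        rw [h2]
        exact Dvd.dvd.mul_left (dvd_mul_of_dvd_left (dvd_pow_self a hk.ne') _) _
      exact (Nat.dvd_add_right (dvd_pow_self a hn.ne')).mp hsum
    exact (hab.pow_right n).eq_one_of_dvd hdvd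
  have hb1 : b = 1 := by
    have hdvd : b ∣ a ^ n := by
      have hsum : b ∣ a ^ n + b ^ n := by
        rw [h2]
        exact Dvd.dvd.mul_left (dvd_mul_of_dvd_right (dvd_pow_self b hℓ.ne') _) _
      rw [add_comm] at hsum
      exact (Nat.dvd_add_right (dvd_pow_self b hn.ne')).mp hsum
    exact ((hab.symm).pow_right n).eq_one_of_dvd hdvd
  have hxg : x = g := by rw [ha, ha1, mul_one]
  have hyg : y = g := by rw [hb, hb1, mul_one]
  refine ⟨hxg.trans hyg.symm, ?_⟩
  rw [ha1, hb1] at h2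
  simp only [one_pow, mul_one] at h2
  rw [hxg]
  omega

theorem case7 (n m k ℓ c : ℕ) (hn : 0 < n) (hm : 0 < m) (hk : 0 < k)
    (hℓ : 0 < ℓ) (hc : 0 < c) (hmn : m = n) (hnkl : n < k + ℓ) :
    (c = 2 → ∀ x y : ℕ, 0 < x → 0 < y →
      (x ^ n + y ^ m = c * x ^ k * y ^ ℓ ↔ x = 1 ∧ y = 1)) ∧
    (3 ≤ c → ¬ ∃ x y : ℕ, 0 < x ∧ 0 < y ∧
      x ^ n + y ^ m = c * x ^ k * y ^ ℓ) ∧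
    (c = 1 → k + ℓ = n + 1 → ∀ x y : ℕ, 0 < x → 0 < y →
      (x ^ n + y ^ m = c * x ^ k * y ^ ℓ ↔ x = 2 ∧ y = 2)) ∧
    (c = 1 → n + 2 ≤ k + ℓ → ¬ ∃ x y : ℕ, 0 < x ∧ 0 < y ∧
      x ^ n + y ^ m = c * x ^ k * y ^ ℓ) := by
  subst hmn
  have ht1 : 1 ≤ k + ℓ - m := by omega
  refine ⟨?_, ?_, ?_, ?_⟩
  · rintro rfl x y hx hy
    constructor
    · intro h
      obtain ⟨hxy, h2⟩ := case7_key m k ℓ 2 x y hm hk hℓ hx hy hnkl h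
      have hle : x ≤ x ^ (k + ℓ - m) := Nat.le_self_pow (by omega) x
      have hx1' : x = 1 := by omega
      exact ⟨hx1', hxy ▸ hx1'⟩
    · rintro ⟨rfl, rfl⟩; simp
  · rintro hc3 ⟨x, y, hx, hy, h⟩
    obtain ⟨hxy, h2⟩ := case7_key m k ℓ c x y hm hk hℓ hx hy hnkl h
    have hxp : 1 ≤ x ^ (k + ℓ - m) := Nat.one_le_pow _ _ hx
    nlinarith
  · rintro rfl hkl x y hx hy
    have ht : k + ℓ - m = 1 := by omega
    constructor
    · intro h
      obtain ⟨hxy, h2⟩ := case7_key m k ℓ 1 x y hm hk hℓ hx hy hnkl h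
      rw [ht, pow_one, one_mul] at h2
      exact ⟨h2, hxy ▸ h2⟩
    · rintro ⟨rfl, rfl⟩
      rw [one_mul, ← pow_add, hkl, pow_succ]
      ring
  · rintro rfl hkl ⟨x, y, hx, hy, h⟩
    obtain ⟨hxy, h2⟩ := case7_key m k ℓ 1 x y hm hk hℓ hx hy hnkl h
    rw [one_mul] at h2
    have ht2 : 2 ≤ k + ℓ - m := by omega
    have hxle : x ≤ 2 := le_trans (Nat.le_self_pow (by omega) x) (le_of_eq h2)
    interval_cases x
    · simp at h2
    · have h4 : 2 ^ 2 ≤ 2 ^ (k + ℓ - m) := Nat.pow_le_pow_right (by norm_num) ht2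
      omega
end

section
/- Let k, ℓ, n be positive integers with k + ℓ < n, let m = n, and suppose c ≥ 3 is prime and n is odd. Then x^n + y^n = c·x^k·y^ℓ has no positive integer solutions. -/
/-!
Dividing a solution by `g = gcd x y` gives coprime `a, b` with
`g ^ (n - k - ℓ) * (a ^ n + b ^ n) = c * a ^ k * b ^ ℓ`. As `a ^ n + b ^ n` is coprime to `a`
and `b`, it divides the prime `c`, so it equals `c`. For odd `n` also `a + b ∣ a ^ n + b ^ n`,
hence `a + b = c = a ^ n + b ^ n`, which for `n ≥ 2` forces `a = b = 1` and `c = 2`.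
-/

namespace Nat

theorem Coprime.pow_add_pow_coprime_pow_mul_pow {a b : ℕ} (hab : Coprime a b) {n : ℕ}
    (hn : n ≠ 0) (k ℓ : ℕ) : Coprime (a ^ n + b ^ n) (a ^ k * b ^ ℓ) := by
  obtain ⟨n, rfl⟩ := exists_eq_succ_of_ne_zero hn
  have hcop_a : Coprime (a ^ (n + 1) + b ^ (n + 1)) a := by
    rw [add_comm, _root_.pow_succ' a, coprime_add_mul_left_left]
    exact hab.symm.pow_left _
  have hcop_b : Coprime (a ^ (n + 1) + b ^ (n + 1)) b := by
    rw [_root_.pow_succ' b, coprime_add_mul_left_left]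
    exact hab.pow_left _
  exact (hcop_a.pow_right k).mul_right (hcop_b.pow_right ℓ)

theorem exists_pos_pow_add_pow_dvd {k ℓ n c x y : ℕ} (hx : 0 < x) (hy : 0 < y)
    (hkln : k + ℓ < n) (h : x ^ n + y ^ n = c * x ^ k * y ^ ℓ) :
    ∃ a b : ℕ, 0 < a ∧ 0 < b ∧ a ^ n + b ^ n ∣ c := by
  obtain ⟨g, a, b, hg, hab, rfl, rfl⟩ := exists_coprime' (gcd_pos_of_pos_left y hx)
  have hreduced : g ^ (k + ℓ) * (g ^ (n - (k + ℓ)) * (a ^ n + b ^ n))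
      = g ^ (k + ℓ) * (c * (a ^ k * b ^ ℓ)) := by
    rw [← mul_assoc, ← pow_add, Nat.add_sub_cancel' hkln.le]
    linear_combination h
  have hdvd : a ^ n + b ^ n ∣ c * (a ^ k * b ^ ℓ) :=
    ⟨g ^ (n - (k + ℓ)),
      by rw [← Nat.eq_of_mul_eq_mul_left (pow_pos hg _) hreduced, mul_comm]⟩
  refine ⟨a, b, pos_of_mul_pos_left hx hg.le, pos_of_mul_pos_left hy hg.le, ?_⟩
  exact (hab.pow_add_pow_coprime_pow_mul_pow (by omega) k ℓ).dvd_of_dvd_mul_right hdvd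

theorem eq_one_of_pow_eq_self {a n : ℕ} (ha : a ≠ 0) (hn : n ≠ 1) (h : a ^ n = a) :
    a = 1 := by
  by_contra ha1
  exact hn ((pow_eq_self_iff (by omega)).mp h)

theorem Prime.eq_two_of_pow_add_pow_dvd {p a b n : ℕ} (hp : p.Prime) (ha : 0 < a) (hb : 0 < b)
    (hn : Odd n) (hn1 : n ≠ 1) (h : a ^ n + b ^ n ∣ p) : p = 2 := by
  have ha_le : a ≤ a ^ n := le_self_pow hn.pos.ne' a
  have hb_le : b ≤ b ^ n := le_self_pow hn.pos.ne' b
  have hpow : a ^ n + b ^ n = p := ((hp.dvd_iff_eq (by omega)).mp h).symm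
  have hsum : a + b = p :=
    ((hp.dvd_iff_eq (by omega)).mp (hpow ▸ Odd.nat_add_dvd_pow_add_pow a b hn)).symm
  have ha1 : a = 1 := eq_one_of_pow_eq_self ha.ne' hn1 (by omega)
  have hb1 : b = 1 := eq_one_of_pow_eq_self hb.ne' hn1 (by omega)
  omega

end Nat

theorem case8_prime_odd_general (k ℓ n c : ℕ) (hk : 0 < k)
    (hkln : k + ℓ < n) (hodd : Odd n) (hc : Nat.Prime c) (hc3 : 3 ≤ c) :
    ¬ ∃ x y : ℕ, 0 < x ∧ 0 < y ∧ x ^ n + y ^ n = c * x ^ k * y ^ ℓ := by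
  rintro ⟨x, y, hx, hy, h⟩
  obtain ⟨a, b, ha, hb, hdvd⟩ := Nat.exists_pos_pow_add_pow_dvd hx hy hkln h
  have := hc.eq_two_of_pow_add_pow_dvd ha hb hodd (by omega) hdvd
  omega

theorem case8_prime_odd (k ℓ n c : ℕ) (hk : 0 < k) (hℓ : 0 < ℓ)
    (hkln : k + ℓ < n) (hodd : Odd n) (hc : Nat.Prime c) (hc3 : 3 ≤ c) :
    ¬ ∃ x y : ℕ, 0 < x ∧ 0 < y ∧ x ^ n + y ^ n = c * x ^ k * y ^ ℓ :=
  case8_prime_odd_general k ℓ n c hk hkln hodd hc hc3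
end
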